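/- Let 0 < μ ≤ L, let f be μ-strongly convex with L-Lipschitz gradient on ℝⁿ, with minimizer x⋆, and let 0 < s ≤ 1/L. Then the iterates of the implicit Euler scheme for the high-resolution NAG-SC ODE satisfy, for every k ≥ 0, f(x_k) − f(x⋆) ≤ ( (3 − 2√(μs) + μs)/(2 + 4√(μs) + 2μs) · sL + 2μ/L + (1 + √(μs))/2 ) · L‖x₀ − x⋆‖² / (1 + √(μs)/4)^k. -/

import Mathlib

open scoped RealInnerProductSpace

private theorem keyineq (q r na ng nd F1 pga pgd : ℝ)
    (hq : 0 < q) (hr : 0 < r) (hm1 : q * r ≤ 1)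
    (hF1 : 0 ≤ F1)
    (hpga : -(na * ng) ≤ pga)
    (hpgd : F1 + q^2 / 2 * nd^2 ≤ pgd) :
    (q*r/4) * (F1 + na^2/4 + (na + 2*q*nd + r*ng)^2/4) ≤
      q*r*r*pga + (q*r + (q*r)^2) * na^2 + q*r*(1+q*r)*pgd + r^2*(1+q*r)/2 * ng^2 := by
  have hm : 0 < q * r := mul_pos hq hr
  nlinarith [mul_nonneg hm.le (sq_nonneg (na - r*ng)),
    mul_nonneg hm.le (sq_nonneg (na/4 - q/2*nd)),
    mul_nonneg (sq_nonneg r) (sq_nonneg (2*q^2*nd - ng)),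
    mul_nonneg (mul_nonneg hm.le hr.le) (by linarith : (0:ℝ) ≤ pga + na*ng),
    mul_nonneg (mul_nonneg hm.le (by linarith : (0:ℝ) ≤ 1 + q*r))
      (by nlinarith [sq_nonneg (q*nd)] : (0:ℝ) ≤ pgd - F1 - q^2/2*nd^2),
    mul_nonneg hm.le hF1, mul_nonneg (sq_nonneg (q*r)) (sq_nonneg na),
    mul_nonneg hm.le (sq_nonneg (q*nd)), mul_nonneg hm.le (sq_nonneg (r*ng))]

private theorem e0ineq (L q r m t nd ng F0 : ℝ)
    (hqr : m = q*r)
    (hq : 0 < q) (hr : 0 < r) (hm1 : m ≤ 1) (htpos : 0 < t) (hL : 0 < L)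
    (hndnn : 0 ≤ nd) (hngnn : 0 ≤ ng) (hngd : ng ≤ L*nd) (hF0 : F0 ≤ L/2*nd^2) :
    F0 + (2*r*t)^2*ng^2/4 + (2*q*nd + r*(1-m)*t*ng)^2/4
      ≤ (3-2*m+m^2)*t^2/2*(r^2*L)*(L*nd^2) + 2*q^2*nd^2 + (1+m)/2*(L*nd^2) := by
  have hm : 0 < m := by rw [hqr]; exact mul_pos hq hr
  have step1 : ng^2 ≤ L^2*nd^2 := by nlinarith
  have step2 : nd*ng ≤ L*nd^2 := by nlinarith
  have c1 : (0:ℝ) ≤ r^2*t^2 := by positivity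
  have c2 : (0:ℝ) ≤ q*r*(1-m)*t := by
    have : (0:ℝ) ≤ 1 - m := by linarith
    positivity
  have c3 : (0:ℝ) ≤ r^2*(1-m)^2*t^2/4 := by positivity
  have b1 : r^2*t^2*ng^2 ≤ r^2*t^2*(L^2*nd^2) := mul_le_mul_of_nonneg_left step1 c1
  have b2 : q*r*(1-m)*t*(nd*ng) ≤ q*r*(1-m)*t*(L*nd^2) := mul_le_mul_of_nonneg_left step2 c2
  have b3 : r^2*(1-m)^2*t^2/4*ng^2 ≤ r^2*(1-m)^2*t^2/4*(L^2*nd^2) :=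
    mul_le_mul_of_nonneg_left step1 c3
  nlinarith [hF0, b1, b2, b3, sq_nonneg (nd*(q - r*(1-m)*t*L/2)),
    mul_nonneg (mul_nonneg hm.le hL.le) (sq_nonneg nd)]

private theorem gradzero {n : ℕ} (f : EuclideanSpace ℝ (Fin n) → ℝ)
    (f' : EuclideanSpace ℝ (Fin n) → EuclideanSpace ℝ (Fin n))
    (hgrad : ∀ z, HasGradientAt f (f' z) z)
    (xstar : EuclideanSpace ℝ (Fin n)) (hmin : ∀ z, f xstar ≤ f z) :
    f' xstar = 0 := by
  have hloc : IsLocalMin f xstar := Filter.Eventually.of_forall hmin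
  have h0 := hloc.hasFDerivAt_eq_zero (hgrad xstar).hasFDerivAt
  have := congrArg (InnerProductSpace.toDual ℝ (EuclideanSpace ℝ (Fin n))).symm h0
  simpa using this

private theorem descent {n : ℕ} (L : ℝ)
    (f : EuclideanSpace ℝ (Fin n) → ℝ)
    (f' : EuclideanSpace ℝ (Fin n) → EuclideanSpace ℝ (Fin n))
    (hgrad : ∀ z, HasGradientAt f (f' z) z)
    (hLip : ∀ z w, ‖f' z - f' w‖ ≤ L * ‖z - w‖)
    (xstar : EuclideanSpace ℝ (Fin n)) (hstar : f' xstar = 0)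
    (x0 : EuclideanSpace ℝ (Fin n)) :
    f x0 - f xstar ≤ L / 2 * ‖x0 - xstar‖ ^ 2 := by
  set d := x0 - xstar with hd
  set φ : ℝ → ℝ := fun t => L * t^2 / 2 * ‖d‖^2 - f (xstar + t • d) with hφ
  have hderiv : ∀ t : ℝ, HasDerivAt φ (L * t * ‖d‖^2 - ⟪f' (xstar + t • d), d⟫) t := by
    intro t
    have hline : HasDerivAt (fun t : ℝ => xstar + t • d) d t := by
      simpa using ((hasDerivAt_id t).smul_const d).const_add xstar
    have hcomp : HasDerivAt (fun t : ℝ => f (xstar + t • d))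
        (⟪f' (xstar + t • d), d⟫) t := by
      have := (hgrad (xstar + t • d)).hasFDerivAt.comp_hasDerivAt t hline
      simpa [InnerProductSpace.toDual_apply_apply, Function.comp_def] using this
    have hpoly : HasDerivAt (fun t : ℝ => L * t^2 / 2 * ‖d‖^2) (L * t * ‖d‖^2) t := by
      have h := (((hasDerivAt_pow 2 t).const_mul L).div_const 2).mul_const (‖d‖^2)
      refine h.congr_deriv ?_
      ring
    exact hpoly.sub hcomp
  have hdiff : Differentiable ℝ φ := fun t => (hderiv t).differentiableAt
  have hmono : MonotoneOn φ (Set.Icc (0:ℝ) 1) := by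
    apply monotoneOn_of_deriv_nonneg (convex_Icc 0 1) hdiff.continuous.continuousOn
      (fun t _ => (hdiff t).differentiableWithinAt)
    intro t ht
    rw [interior_Icc, Set.mem_Ioo] at ht
    rw [(hderiv t).deriv]
    have h1 : ⟪f' (xstar + t • d), d⟫ ≤ ‖f' (xstar + t • d)‖ * ‖d‖ :=
      real_inner_le_norm _ _
    have h2 : ‖f' (xstar + t • d)‖ ≤ L * (t * ‖d‖) := by
      have := hLip (xstar + t • d) xstar
      rw [hstar] at this
      simpa [norm_smul, abs_of_nonneg ht.1.le, mul_assoc] using this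
    nlinarith [norm_nonneg d, norm_nonneg (f' (xstar + t • d)), ht.1.le]
  have := hmono (Set.left_mem_Icc.mpr zero_le_one) (Set.right_mem_Icc.mpr zero_le_one)
    zero_le_one
  simp only [hφ] at this
  simp only [zero_smul, add_zero, one_smul, zero_pow, mul_zero, zero_div] at this
  have hx0 : xstar + d = x0 := by rw [hd]; abel
  rw [hx0] at this
  nlinarith [this]

set_option maxHeartbeats 1000000 in
theorem stmt10
    {n : ℕ} (μ L : ℝ) (hμ : 0 < μ) (hμL : μ ≤ L)
    (f : EuclideanSpace ℝ (Fin n) → ℝ)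
    (f' : EuclideanSpace ℝ (Fin n) → EuclideanSpace ℝ (Fin n))
    (hgrad : ∀ z, HasGradientAt f (f' z) z)
    (hLip : ∀ z w, ‖f' z - f' w‖ ≤ L * ‖z - w‖)
    (hsc : ∀ z w, f w ≥ f z + ⟪f' z, w - z⟫ + μ / 2 * ‖w - z‖ ^ 2)
    (xstar : EuclideanSpace ℝ (Fin n)) (hmin : ∀ z, f xstar ≤ f z)
    (s : ℝ) (hs0 : 0 < s) (hs : s ≤ 1 / L)
    (x v : ℕ → EuclideanSpace ℝ (Fin n))
    (hv0 : v 0 = -((2 * Real.sqrt s / (1 + Real.sqrt (μ * s))) • f' (x 0)))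
    (hx : ∀ k : ℕ, x (k + 1) - x k = Real.sqrt s • v (k + 1))
    (hv : ∀ k : ℕ, v (k + 1) - v k = -((2 * Real.sqrt (μ * s)) • v (k + 1))
      - Real.sqrt s • (f' (x (k + 1)) - f' (x k))
      - (Real.sqrt s * (1 + Real.sqrt (μ * s))) • f' (x (k + 1)))
    : ∀ k : ℕ, f (x k) - f xstar ≤
      ((3 - 2 * Real.sqrt (μ * s) + μ * s) / (2 + 4 * Real.sqrt (μ * s) + 2 * (μ * s)) * (s * L)
        + 2 * μ / L + (1 + Real.sqrt (μ * s)) / 2) *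
      (L * ‖x 0 - xstar‖ ^ 2) / (1 + Real.sqrt (μ * s) / 4) ^ k := by
  have hL : 0 < L := lt_of_lt_of_le hμ hμL
  set r : ℝ := Real.sqrt s with hrdef
  set q : ℝ := Real.sqrt μ with hqdef
  set m : ℝ := Real.sqrt (μ * s) with hmdef
  have hr : 0 < r := Real.sqrt_pos.mpr hs0
  have hq : 0 < q := Real.sqrt_pos.mpr hμ
  have hqr : m = q * r := by rw [hmdef, hqdef, hrdef, Real.sqrt_mul hμ.le]
  have hm : 0 < m := by rw [hqr]; exact mul_pos hq hr
  have hq2 : q ^ 2 = μ := Real.sq_sqrt hμ.le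
  have hr2 : r ^ 2 = s := Real.sq_sqrt hs0.le
  have hm2 : m ^ 2 = μ * s := Real.sq_sqrt (mul_nonneg hμ.le hs0.le)
  have hm1 : m ≤ 1 := by
    rw [hmdef, show (1:ℝ) = Real.sqrt 1 by simp]
    apply Real.sqrt_le_sqrt
    calc μ * s ≤ μ * (1 / L) := mul_le_mul_of_nonneg_left hs hμ.le
      _ ≤ 1 := by rw [mul_one_div]; exact div_le_one_of_le₀ hμL hL.le
  have h1m : (0:ℝ) < 1 + m := by linarith
  set E : ℕ → ℝ := fun k =>
    (f (x k) - f xstar) + ‖v k‖^2/4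
      + ‖v k + (2*q) • (x k - xstar) + r • f' (x k)‖^2/4 with hE
  have hstep : ∀ k : ℕ, (1 + m/4) * E (k+1) ≤ E k := by
    intro k
    set a := v (k+1) with ha
    set b := v k with hb
    set g := f' (x (k+1)) with hg
    set g0 := f' (x k) with hg0
    set d := x (k+1) - xstar with hd
    set d0 := x k - xstar with hd0
    have hxk : x (k+1) - x k = r • a := hx k
    have hvk : a - b = -((2*m) • a) - r • (g - g0) - (r*(1+m)) • g := hv k
    have hdd : d - d0 = r • a := by
      rw [hd, hd0, sub_sub_sub_cancel_right]; exact hxk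
    have hw : (a + (2*q) • d + r • g) - (b + (2*q) • d0 + r • g0)
        = -((r*(1+m)) • g) := by
      rw [hqr] at hvk ⊢
      linear_combination (norm := module) hvk + (2*q) • hdd
    set w1 := a + (2*q) • d + r • g with hw1
    set w0 := b + (2*q) • d0 + r • g0 with hw0
    have hμs : μ * s = m ^ 2 := hm2.symm
    have hnegra : x k - x (k+1) = -(r • a) := by rw [← hxk]; abel
    have enr : ‖-(r • a)‖^2 = s * ‖a‖^2 := by
      rw [norm_neg, norm_smul, Real.norm_eq_abs, mul_pow, sq_abs, hr2]
    have er : ‖r • a‖^2 = s * ‖a‖^2 := by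
      rw [norm_smul, Real.norm_eq_abs, mul_pow, sq_abs, hr2]
    have einner : ⟪g, -(r • a)⟫ = -(r * ⟪g, a⟫) := by
      rw [inner_neg_right, real_inner_smul_right]
    -- (i) function decrease bound
    have hfdiff : f (x (k+1)) - f (x k) ≤ r * ⟪g, a⟫ - m^2/2 * ‖a‖^2 := by
      have h := hsc (x (k+1)) (x k)
      rw [hnegra, einner, enr] at h
      have e : μ/2 * (s * ‖a‖^2) = m^2/2 * ‖a‖^2 := by rw [← hμs]; ring
      linarith [h, e.le, e.ge]
    -- (ii) gradient monotonicity
    have hmono : m^2 * ‖a‖^2 ≤ r * ⟪g, a⟫ - r * ⟪g0, a⟫ := by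
      have h1 := hsc (x (k+1)) (x k)
      have h2 := hsc (x k) (x (k+1))
      rw [hnegra, einner, enr] at h1
      rw [hxk, real_inner_smul_right, er] at h2
      have e : μ/2 * (s * ‖a‖^2) = m^2/2 * ‖a‖^2 := by rw [← hμs]; ring
      linarith [h1, h2, e.le, e.ge]
    -- (iii) strong convexity toward minimizer
    have hpgd : (f (x (k+1)) - f xstar) + q^2/2 * ‖d‖^2 ≤ ⟪g, d⟫ := by
      have h := hsc (x (k+1)) xstar
      have e1 : xstar - x (k+1) = -d := by rw [hd]; abel
      rw [e1, inner_neg_right, norm_neg] at h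
      rw [hq2]
      linarith [h]
    have hF1 : 0 ≤ f (x (k+1)) - f xstar := sub_nonneg.mpr (hmin _)
    -- norm-square difference identities
    have hv2 : ‖a‖^2 - ‖b‖^2 ≤ 2*⟪a, a-b⟫ := by
      have h := norm_sub_sq_real a (a - b)
      simp only [sub_sub_cancel] at h
      linarith [h, sq_nonneg ‖a - b‖]
    have hw2 : ‖w1‖^2 - ‖w0‖^2 ≤ 2*⟪w1, w1-w0⟫ := by
      have h := norm_sub_sq_real w1 (w1 - w0)
      simp only [sub_sub_cancel] at h
      linarith [h, sq_nonneg ‖w1 - w0‖]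
    -- inner product computations
    have hinner1 : ⟪a, a-b⟫ = -(2*m*‖a‖^2) - r*(⟪g,a⟫ - ⟪g0,a⟫) - r*(1+m)*⟪g,a⟫ := by
      rw [hvk]
      simp only [inner_sub_right, inner_neg_right, real_inner_smul_right,
        real_inner_self_eq_norm_sq]
      rw [real_inner_comm a g, real_inner_comm a g0]
      all_goals ring
    have hinner2 : ⟪w1, w1-w0⟫ = -(r*(1+m)*(⟪g,a⟫ + 2*q*⟪g,d⟫ + r*‖g‖^2)) := by
      rw [hw1, hw0] at hw
      rw [hw, hw1]
      simp only [inner_add_left, inner_neg_right, real_inner_smul_right,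
        real_inner_smul_left, real_inner_self_eq_norm_sq]
      rw [real_inner_comm a g, real_inner_comm d g]
      all_goals ring
    -- combine into the Lyapunov decrease
    have hdecr : E (k+1) - E k ≤
        -(m*r*⟪g,a⟫) - (m+m^2)*‖a‖^2 - m*(1+m)*⟪g,d⟫ - r^2*(1+m)/2*‖g‖^2 := by
      have hEk1 : E (k+1) = (f (x (k+1)) - f xstar) + ‖a‖^2/4 + ‖w1‖^2/4 := by
        simp only [hE, ha, hg, hd, hw1]
      have hEk : E k = (f (x k) - f xstar) + ‖b‖^2/4 + ‖w0‖^2/4 := by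
        simp only [hE, hb, hg0, hd0, hw0]
      have c1 : ⟪a, a - b⟫ ≤ -(2*m*‖a‖^2) - m^2*‖a‖^2 - r*(1+m)*⟪g,a⟫ := by
        rw [hinner1]; linarith [hmono]
      rw [hEk1, hEk]
      rw [hqr] at hfdiff c1 hinner2 ⊢
      linarith [hv2, hw2, hfdiff, c1, hinner2]
    -- upper bound on (m/4) E(k+1)
    have hwnorm : ‖w1‖ ≤ ‖a‖ + 2*q*‖d‖ + r*‖g‖ := by
      calc ‖w1‖ ≤ ‖a + (2*q) • d‖ + ‖r • g‖ := norm_add_le _ _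
        _ ≤ ‖a‖ + ‖(2*q) • d‖ + ‖r • g‖ := by linarith [norm_add_le a ((2*q) • d)]
        _ = ‖a‖ + 2*q*‖d‖ + r*‖g‖ := by
            rw [norm_smul, norm_smul, Real.norm_eq_abs, Real.norm_eq_abs]
            rw [abs_of_nonneg hr.le, abs_of_nonneg (by linarith : (0:ℝ) ≤ 2*q)]
    have hwsq : ‖w1‖^2 ≤ (‖a‖ + 2*q*‖d‖ + r*‖g‖)^2 :=
      pow_le_pow_left₀ (norm_nonneg w1) hwnorm 2
    have hpga : -(‖a‖ * ‖g‖) ≤ ⟪g, a⟫ := by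
      have h := (abs_le.mp (abs_real_inner_le_norm g a)).1
      have e : -(‖a‖ * ‖g‖) = -(‖g‖ * ‖a‖) := by ring
      linarith [e.le, e.ge]
    have hkey := keyineq q r ‖a‖ ‖g‖ ‖d‖ (f (x (k+1)) - f xstar) ⟪g,a⟫ ⟪g,d⟫
      hq hr (by rw [← hqr]; exact hm1) hF1 hpga hpgd
    have hEup : E (k+1) ≤ (f (x (k+1)) - f xstar) + ‖a‖^2/4 + (‖a‖ + 2*q*‖d‖ + r*‖g‖)^2/4 := by
      have hEk1 : E (k+1) = (f (x (k+1)) - f xstar) + ‖a‖^2/4 + ‖w1‖^2/4 := by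
        simp only [hE, ha, hg, hd, hw1]
      rw [hEk1]; linarith [hwsq]
    have hmulE : (m/4) * E (k+1) ≤
        m*r*⟪g,a⟫ + (m+m^2)*‖a‖^2 + m*(1+m)*⟪g,d⟫ + r^2*(1+m)/2*‖g‖^2 := by
      have h1 : (m/4) * E (k+1)
          ≤ (m/4) * ((f (x (k+1)) - f xstar) + ‖a‖^2/4 + (‖a‖ + 2*q*‖d‖ + r*‖g‖)^2/4) :=
        mul_le_mul_of_nonneg_left hEup (by positivity)
      rw [hqr] at h1 ⊢
      calc (q*r/4) * E (k+1)
          ≤ (q*r/4) * ((f (x (k+1)) - f xstar) + ‖a‖^2/4 + (‖a‖ + 2*q*‖d‖ + r*‖g‖)^2/4) := h1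
        _ ≤ q*r*r*⟪g,a⟫ + (q*r + (q*r)^2) * ‖a‖^2 + q*r*(1+q*r)*⟪g,d⟫
              + r^2*(1+q*r)/2 * ‖g‖^2 := hkey
        _ = q*r*r*⟪g,a⟫ + (q*r+(q*r)^2)*‖a‖^2 + q*r*(1+q*r)*⟪g,d⟫ + r^2*(1+q*r)/2*‖g‖^2 := by
            ring
    linarith [hdecr, hmulE]
  -- geometric decay
  have hrho : (0:ℝ) < 1 + m/4 := by linarith
  have hEdecay : ∀ k : ℕ, E k ≤ E 0 / (1 + m/4)^k := by
    intro k
    induction k with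
    | zero => simp
    | succ k ih =>
      have h1 : E (k+1) ≤ E k / (1 + m/4) := by
        rw [le_div_iff₀ hrho]; linarith [hstep k]
      calc E (k+1) ≤ E k / (1 + m/4) := h1
        _ ≤ (E 0 / (1 + m/4)^k) / (1 + m/4) := div_le_div_of_nonneg_right ih hrho.le
        _ = E 0 / (1 + m/4)^(k+1) := by rw [div_div, ← pow_succ]
  -- bound on E 0
  have hgz : f' xstar = 0 := gradzero f f' hgrad xstar hmin
  have hngd : ‖f' (x 0)‖ ≤ L * ‖x 0 - xstar‖ := by
    have := hLip (x 0) xstar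
    rwa [hgz, sub_zero] at this
  have hF0 : f (x 0) - f xstar ≤ L/2 * ‖x 0 - xstar‖^2 :=
    descent L f f' hgrad hLip xstar hgz (x 0)
  set t : ℝ := 1/(1+m) with htdef
  have htpos : 0 < t := by positivity
  have hv0n : ‖v 0‖ = 2*r*t * ‖f' (x 0)‖ := by
    rw [hv0, norm_neg, norm_smul, Real.norm_eq_abs]
    rw [abs_of_nonneg (by positivity : (0:ℝ) ≤ 2 * r / (1+m))]
    rw [htdef]; ring
  have hw0eq : v 0 + (2*q) • (x 0 - xstar) + r • f' (x 0)
      = (2*q) • (x 0 - xstar) - (r*(1-m)*t) • f' (x 0) := by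
    rw [hv0]
    have hsc2 : (2 * r / (1 + m)) = r + r*(1-m)*t := by
      rw [htdef]; field_simp; ring
    rw [hsc2]
    module
  have hcnn : (0:ℝ) ≤ r*(1-m)*t := by
    have : (0:ℝ) ≤ 1 - m := by linarith
    positivity
  have hw0n : ‖v 0 + (2*q) • (x 0 - xstar) + r • f' (x 0)‖
      ≤ 2*q*‖x 0 - xstar‖ + r*(1-m)*t*‖f' (x 0)‖ := by
    rw [hw0eq]
    calc ‖(2*q) • (x 0 - xstar) - (r*(1-m)*t) • f' (x 0)‖
        ≤ ‖(2*q) • (x 0 - xstar)‖ + ‖(r*(1-m)*t) • f' (x 0)‖ := norm_sub_le _ _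
      _ = 2*q*‖x 0 - xstar‖ + r*(1-m)*t*‖f' (x 0)‖ := by
          rw [norm_smul, norm_smul, Real.norm_eq_abs, Real.norm_eq_abs,
            abs_of_nonneg (by linarith : (0:ℝ) ≤ 2*q), abs_of_nonneg hcnn]
  have hE0 : E 0 ≤ ((3 - 2*m + μ*s) / (2 + 4*m + 2*(μ*s)) * (s*L)
      + 2*μ/L + (1+m)/2) * (L * ‖x 0 - xstar‖^2) := by
    have hw0sq : ‖v 0 + (2*q) • (x 0 - xstar) + r • f' (x 0)‖^2
        ≤ (2*q*‖x 0 - xstar‖ + r*(1-m)*t*‖f' (x 0)‖)^2 :=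
      pow_le_pow_left₀ (norm_nonneg _) hw0n 2
    have hv0sq : ‖v 0‖^2 = (2*r*t)^2 * ‖f' (x 0)‖^2 := by rw [hv0n]; ring
    have hEexp : E 0 = (f (x 0) - f xstar) + ‖v 0‖^2/4
        + ‖v 0 + (2*q) • (x 0 - xstar) + r • f' (x 0)‖^2/4 := by
      simp only [hE]
    have hmain := e0ineq L q r m t ‖x 0 - xstar‖ ‖f' (x 0)‖ (f (x 0) - f xstar)
      hqr hq hr hm1 htpos hL (norm_nonneg _) (norm_nonneg _) hngd hF0
    have hCrw : (3 - 2*m + μ*s) / (2 + 4*m + 2*(μ*s)) = (3 - 2*m + m^2) * t^2 / 2 := by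
      rw [← hm2, htdef]
      have hden : (0:ℝ) < 2 + 4*m + 2*m^2 := by positivity
      rw [div_eq_div_iff hden.ne' (by norm_num : (2:ℝ) ≠ 0)]
      field_simp
      ring
    have hconst : ((3 - 2*m + μ*s) / (2 + 4*m + 2*(μ*s)) * (s*L)
        + 2*μ/L + (1+m)/2) * (L * ‖x 0 - xstar‖^2)
        = (3-2*m+m^2)*t^2/2*(r^2*L)*(L*‖x 0 - xstar‖^2) + 2*q^2*‖x 0 - xstar‖^2
          + (1+m)/2*(L*‖x 0 - xstar‖^2) := by
      rw [hCrw, ← hq2, ← hr2]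
      field_simp
    rw [hconst, hEexp, hv0sq]
    linarith [hmain, hw0sq]
  -- conclusion
  intro k
  have h1 : f (x k) - f xstar ≤ E k := by
    simp only [hE]
    linarith [sq_nonneg ‖v k‖, sq_nonneg ‖v k + (2*q) • (x k - xstar) + r • f' (x k)‖]
  have h3 : E 0 / (1 + m/4)^k ≤
      ((3 - 2*m + μ*s) / (2 + 4*m + 2*(μ*s)) * (s*L) + 2*μ/L + (1+m)/2)
        * (L * ‖x 0 - xstar‖^2) / (1 + m/4)^k :=
    div_le_div_of_nonneg_right hE0 (pow_pos hrho k).le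
  calc f (x k) - f xstar ≤ E k := h1
    _ ≤ E 0 / (1 + m/4)^k := hEdecay k
    _ ≤ _ := h3
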